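/- Let uK[Z] be a Stanley space of S_f, i.e. a free K[Z]-submodule of S_f generated by a monomial u of S_f, where Z ⊆ {x_1,…,x_n} ∪ {x_j^{-1} : j ∈ A} with {x_j, x_j^{-1}} ⊄ Z for all j ∈ A, and let m = |Z|. Then the Hilbert series of uK[Z] satisfies H_{uK[Z]}(t) = Q(t)/(1-t)^m for some polynomial Q(t) with Q(1) = 1. -/

import Mathlib

/-!
Combinatorial model of the localized polynomial ring `S_f`, where
`S = K[x_1, …, x_n]`, `A ⊆ {1, …, n}` and `f = ∏_{j ∈ A} x_j`.

Since all the `ℤⁿ`-graded components of `S_f` are at most one-dimensional over `K`,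
monomial `K`-subspaces of `S_f` (in particular monomial ideals, Stanley spaces and
modules `I/J`) are faithfully encoded by their sets of exponent vectors `a : Fin n → ℤ`,
direct sum decompositions into monomial subspaces correspond exactly to partitions of
the exponent sets, and (for those sets `Z` considered here) `u·K[Z]` is automatically a
free `K[Z]`-module.
-/

/-- Exponent vectors of the monomials of `S_f`: all `a : ℤⁿ` with `a j ≥ 0` for `j ∉ A`. -/
def SfMon {n : ℕ} (A : Finset (Fin n)) : Set (Fin n → ℤ) :=
  {a | ∀ j, j ∉ A → 0 ≤ a j}

/-- `M` is the set of exponent vectors of the monomials of a monomial ideal of `S_f`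
(for `A = ∅` this is a monomial ideal of the polynomial ring `S` itself). -/
def IsMonomialIdeal {n : ℕ} (A : Finset (Fin n)) (M : Set (Fin n → ℤ)) : Prop :=
  M ⊆ SfMon A ∧ ∀ a ∈ M, ∀ c ∈ SfMon A, a + c ∈ M

/-- Admissible sets of "variables" for Stanley spaces in `S_f`: `(i, true)` stands for
`x i` and `(i, false)` for `x i⁻¹`; inverse variables exist only for `i ∈ A`, and
`{x i, x i⁻¹} ⊄ Z`. -/
def ZOk {n : ℕ} (A : Finset (Fin n)) (Z : Finset (Fin n × Bool)) : Prop :=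
  (∀ i : Fin n, (i, false) ∈ Z → i ∈ A) ∧
  ∀ i : Fin n, ¬((i, true) ∈ Z ∧ (i, false) ∈ Z)

/-- Exponent vectors of the monomials of the Stanley space `u·K[Z]`. -/
def stanleySet {n : ℕ} (u : Fin n → ℤ) (Z : Finset (Fin n × Bool)) : Set (Fin n → ℤ) :=
  {a | ∀ i : Fin n, ((i, true) ∈ Z → u i ≤ a i) ∧ ((i, false) ∈ Z → a i ≤ u i) ∧
      ((i, true) ∉ Z → (i, false) ∉ Z → a i = u i)}

/-- The family of Stanley spaces `u i · K[Z i]` is a Stanley decomposition of the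
monomial `K`-vector space whose monomials have exponent vectors in `M`. -/
def IsStanleyDecompOn {n : ℕ} (A : Finset (Fin n)) (M : Set (Fin n → ℤ)) {ι : Type}
    (u : ι → Fin n → ℤ) (Z : ι → Finset (Fin n × Bool)) : Prop :=
  Finite ι ∧ (∀ i, ZOk A (Z i)) ∧
  Pairwise (fun i j : ι => Disjoint (stanleySet (u i) (Z i)) (stanleySet (u j) (Z j))) ∧
  (⋃ i, stanleySet (u i) (Z i)) = M

/-- Stanley depth of the monomial `K`-space with exponent set `M` (value `⊤` for `M = ∅`). -/
noncomputable def sdepth {n : ℕ} (A : Finset (Fin n)) (M : Set (Fin n → ℤ)) : ℕ∞ :=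
  sSup {k : ℕ∞ | ∃ (r : ℕ) (u : Fin r → Fin n → ℤ) (Z : Fin r → Finset (Fin n × Bool)),
    IsStanleyDecompOn A M u Z ∧ ∀ i, k ≤ ((Z i).card : ℕ∞)}

/-- The exponent vector of `f = ∏_{j ∈ A} x_j`. -/
def fVec {n : ℕ} (A : Finset (Fin n)) : Fin n → ℤ := fun i => if i ∈ A then 1 else 0

/-- Localization at `f` of a monomial ideal (given by its set of exponent vectors). -/
def locSet {n : ℕ} (A : Finset (Fin n)) (M : Set (Fin n → ℤ)) : Set (Fin n → ℤ) :=
  {b ∈ SfMon A | ∃ k : ℕ, b + (k : ℤ) • fVec A ∈ M}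

/-- `|a| = Σ_i |a_i|`, the degree used for the Hilbert series. -/
def degAbs {n : ℕ} (a : Fin n → ℤ) : ℕ := ∑ i, (a i).natAbs

/-- The Hilbert series `H_M(t) = Σ_d H(M,d) t^d`, `H(M,d) = #{a ∈ M : |a| = d}`, of the
`ℤⁿ`-graded `K`-vector space with monomial exponent set `M`. -/
noncomputable def hilbSeries {n : ℕ} (M : Set (Fin n → ℤ)) : PowerSeries ℚ :=
  PowerSeries.mk fun d => (({a ∈ M | degAbs a = d}).ncard : ℚ)

/-- A prime filtration `J = N 0 ⊂ N 1 ⊂ … ⊂ N r = I` of `I/J` by monomial ideals of `S_f`,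
with `i`-th factor isomorphic, as a `ℤⁿ`-graded module, to `(S_f/P_{B i})(-a i)`, where
`P_B` is the monomial prime ideal generated by the variables `x j`, `j ∈ B`. -/
def IsPrimeFiltration {n : ℕ} (A : Finset (Fin n)) (J I : Set (Fin n → ℤ)) (r : ℕ)
    (N : Fin (r + 1) → Set (Fin n → ℤ)) (B : Fin r → Finset (Fin n))
    (a : Fin r → Fin n → ℤ) : Prop :=
  N 0 = J ∧ N (Fin.last r) = I ∧
  (∀ i : Fin (r + 1), IsMonomialIdeal A (N i)) ∧
  (∀ i : Fin r, N i.castSucc ⊂ N i.succ) ∧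
  (∀ i : Fin r, ∀ j ∈ A, j ∉ B i) ∧
  (∀ i : Fin r, ∀ j, 0 ≤ a i j) ∧
  (∀ i : Fin r, ∀ j ∈ A, a i j = 0) ∧
  (∀ i : Fin r, N i.succ \ N i.castSucc =
    {b | ∃ c ∈ SfMon A, (∀ j ∈ B i, c j = 0) ∧ b = a i + c})

/-- `fdepth` of `I/J` (value `⊤` for `I = J`); `dim S_f/P_B = n - |B|`. -/
noncomputable def fdepth {n : ℕ} (A : Finset (Fin n)) (J I : Set (Fin n → ℤ)) : ℕ∞ :=
  sSup {k : ℕ∞ | ∃ (r : ℕ) (N : Fin (r + 1) → Set (Fin n → ℤ)) (B : Fin r → Finset (Fin n))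
      (a : Fin r → Fin n → ℤ), IsPrimeFiltration A J I r N B a ∧
      ∀ i, k ≤ ((n - (B i).card : ℕ) : ℕ∞)}

/-- The set of exponent vectors of the monomials of the colon ideal `(J :_{S_f} I)`,
which is the annihilator of `I/J`. -/
def colonSet {n : ℕ} (A : Finset (Fin n)) (I J : Set (Fin n → ℤ)) : Set (Fin n → ℤ) :=
  {c ∈ SfMon A | ∀ a ∈ I, a + c ∈ J}

/-- The monomial prime `P_B·S_f` contains the monomial ideal with exponent set `Q`. -/
def primeContainsIdeal {n : ℕ} (B : Finset (Fin n)) (Q : Set (Fin n → ℤ)) : Prop :=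
  ∀ c ∈ Q, ∃ j ∈ B, 1 ≤ c j

/-- `P_B·S_f` is a minimal prime ideal of the module `I/J`, i.e. a prime of `S_f`
(so `B ∩ A = ∅`) minimal among those containing `ann(I/J) = (J : I)`. -/
def IsMinimalPrimeOf {n : ℕ} (A B : Finset (Fin n)) (I J : Set (Fin n → ℤ)) : Prop :=
  (∀ j ∈ A, j ∉ B) ∧ primeContainsIdeal B (colonSet A I J) ∧
  ∀ B' ⊆ B, primeContainsIdeal B' (colonSet A I J) → B' = B


/-! ### Auxiliary lemmas -/

def rayP : Bool → ℤ → ℤ → Prop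
  | true, v, w => v ≤ w
  | false, v, w => w ≤ v

noncomputable def rayCount (b : Bool) (v : ℤ) (k : ℕ) : ℕ :=
  {w : ℤ | rayP b v w ∧ w.natAbs = k}.ncard

lemma rayCount_true (v : ℤ) (k : ℕ) :
    rayCount true v k = if v ≤ -(k:ℤ) then (if k = 0 then 1 else 2)
      else if v ≤ (k:ℤ) then 1 else 0 := by
  unfold rayCount
  simp only [rayP]
  split_ifs with h1 h2
  · subst h2
    rw [show {w : ℤ | v ≤ w ∧ w.natAbs = 0} = {0} by
      ext w; simp only [Set.mem_setOf_eq, Set.mem_singleton_iff]; omega]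
    simp
  · rw [show {w : ℤ | v ≤ w ∧ w.natAbs = k} = {(k:ℤ), -(k:ℤ)} by
      ext w; simp only [Set.mem_setOf_eq, Set.mem_insert_iff, Set.mem_singleton_iff]; omega,
      Set.ncard_pair (by omega)]
  · rw [show {w : ℤ | v ≤ w ∧ w.natAbs = k} = {(k:ℤ)} by
      ext w; simp only [Set.mem_setOf_eq, Set.mem_singleton_iff]; omega]
    simp
  · rw [show {w : ℤ | v ≤ w ∧ w.natAbs = k} = ∅ by
      ext w; simp only [Set.mem_setOf_eq, Set.mem_empty_iff_false, iff_false, not_and]; omega]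
    simp

lemma rayCount_false (v : ℤ) (k : ℕ) : rayCount false v k = rayCount true (-v) k := by
  unfold rayCount
  rw [show {w : ℤ | rayP false v w ∧ w.natAbs = k}
      = Neg.neg '' {w : ℤ | rayP true (-v) w ∧ w.natAbs = k} by
    ext w
    simp only [Set.mem_image, Set.mem_setOf_eq, rayP]
    constructor
    · rintro ⟨h1, h2⟩; exact ⟨-w, ⟨by omega, by omega⟩, by omega⟩
    · rintro ⟨x, ⟨h1, h2⟩, rfl⟩; exact ⟨by omega, by omega⟩]
  exact Set.ncard_image_of_injective _ neg_injective

lemma coeff_mul_one_sub_zero (g : PowerSeries ℚ) :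
    (PowerSeries.coeff (R := ℚ) 0) (g * (1 - PowerSeries.X)) = PowerSeries.coeff (R := ℚ) 0 g := by
  rw [mul_sub, mul_one, map_sub, PowerSeries.coeff_zero_mul_X, sub_zero]

lemma coeff_mul_one_sub_succ (g : PowerSeries ℚ) (n : ℕ) :
    (PowerSeries.coeff (R := ℚ) (n+1)) (g * (1 - PowerSeries.X))
      = PowerSeries.coeff (R := ℚ) (n+1) g - PowerSeries.coeff (R := ℚ) n g := by
  rw [mul_sub, mul_one, map_sub, PowerSeries.coeff_succ_mul_X]

set_option linter.unreachableTactic false in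
set_option linter.unusedTactic false in
lemma ray_poly_true (v : ℤ) :
    ∃ q : Polynomial ℚ,
      (PowerSeries.mk fun k => (rayCount true v k : ℚ)) * (1 - PowerSeries.X)
        = (q : PowerSeries ℚ) ∧ q.eval 1 = 1 := by
  rcases le_or_gt v 0 with hv | hv
  · refine ⟨1 + Polynomial.X - Polynomial.X ^ ((-v).toNat + 1), ?_, by simp⟩
    ext n
    rw [Polynomial.coeff_coe]
    simp only [Polynomial.coeff_sub, Polynomial.coeff_add, Polynomial.coeff_one,
      Polynomial.coeff_X, Polynomial.coeff_X_pow]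
    cases n with
    | zero =>
      rw [coeff_mul_one_sub_zero, PowerSeries.coeff_mk, rayCount_true]
      split_ifs <;> first | (norm_num; done) | (exfalso; omega) | exact (‹False›).elim
    | succ n =>
      rw [coeff_mul_one_sub_succ, PowerSeries.coeff_mk, PowerSeries.coeff_mk,
        rayCount_true, rayCount_true]
      split_ifs <;> first | (norm_num; done) | (exfalso; omega) | exact (‹False›).elim
  · refine ⟨Polynomial.X ^ v.toNat, ?_, by simp⟩
    ext n
    rw [Polynomial.coeff_coe, Polynomial.coeff_X_pow]
    cases n with
    | zero =>
      rw [coeff_mul_one_sub_zero, PowerSeries.coeff_mk, rayCount_true]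
      split_ifs <;> first | (norm_num; done) | (exfalso; omega) | exact (‹False›).elim
    | succ n =>
      rw [coeff_mul_one_sub_succ, PowerSeries.coeff_mk, PowerSeries.coeff_mk,
        rayCount_true, rayCount_true]
      split_ifs <;> first | (norm_num; done) | (exfalso; omega) | exact (‹False›).elim

lemma ray_poly (b : Bool) (v : ℤ) :
    ∃ q : Polynomial ℚ,
      (PowerSeries.mk fun k => (rayCount b v k : ℚ)) * (1 - PowerSeries.X)
        = (q : PowerSeries ℚ) ∧ q.eval 1 = 1 := by
  cases b
  · simp only [rayCount_false]; exact ray_poly_true (-v)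
  · exact ray_poly_true v

lemma natAbs_le_degAbs {n : ℕ} (a : Fin n → ℤ) (i : Fin n) : (a i).natAbs ≤ degAbs a :=
  Finset.single_le_sum (f := fun j => (a j).natAbs) (fun _ _ => Nat.zero_le _)
    (Finset.mem_univ i)

lemma finite_degAbs {n : ℕ} (d : ℕ) : {a : Fin n → ℤ | degAbs a = d}.Finite := by
  apply Set.Finite.subset (Set.Finite.pi (t := fun _ : Fin n => Set.Icc (-(d:ℤ)) d)
    (fun _ => Set.finite_Icc _ _))
  intro a ha j _
  have h1 : (a j).natAbs ≤ d := ha ▸ natAbs_le_degAbs a j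
  simp only [Set.mem_Icc]; omega

lemma degAbs_update {n : ℕ} (a : Fin n → ℤ) (i : Fin n) :
    degAbs a = (a i).natAbs + degAbs (Function.update a i 0) := by
  unfold degAbs
  rw [show (∑ j, (Function.update a i 0 j).natAbs)
      = ∑ j, (Function.update (fun j => (a j).natAbs) i 0 j) from
    Finset.sum_congr rfl (fun j _ => by
      rcases eq_or_ne j i with rfl | h
      · simp
      · simp [Function.update_of_ne h])]
  rw [Finset.sum_update_of_mem (Finset.mem_univ i), zero_add,
    Finset.sdiff_singleton_eq_erase, ← Finset.add_sum_erase _ _ (Finset.mem_univ i)]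

lemma ncard_prod {α β : Type*} (s : Set α) (t : Set β) :
    (s ×ˢ t).ncard = s.ncard * t.ncard := by
  rw [← Nat.card_coe_set_eq, ← Nat.card_coe_set_eq, ← Nat.card_coe_set_eq,
    Nat.card_congr (Equiv.Set.prod s t), Nat.card_prod]

lemma mem_stanley_insert {n : ℕ} {u : Fin n → ℤ} {i : Fin n} {b : Bool}
    {Z : Finset (Fin n × Bool)} (h2 : (i, true) ∉ Z) (h3 : (i, false) ∉ Z)
    (a : Fin n → ℤ) :
    a ∈ stanleySet u (insert (i, b) Z) ↔
      rayP b (u i) (a i) ∧ Function.update a i 0 ∈ stanleySet (Function.update u i 0) Z := by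
  simp only [stanleySet, Set.mem_setOf_eq, Finset.mem_insert, Prod.mk.injEq]
  constructor
  · intro ha
    refine ⟨?_, fun j => ?_⟩
    · cases b with
      | true => exact (ha i).1 (Or.inl ⟨rfl, rfl⟩)
      | false => exact (ha i).2.1 (Or.inl ⟨rfl, rfl⟩)
    · rcases eq_or_ne j i with rfl | hj
      · exact ⟨fun h => absurd h h2, fun h => absurd h h3, fun _ _ => by simp⟩
      · simp only [Function.update_of_ne hj]
        exact ⟨fun h => (ha j).1 (Or.inr h), fun h => (ha j).2.1 (Or.inr h),
          fun hT hF => (ha j).2.2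
            (by rintro (⟨rfl, rfl⟩ | h); exact hj rfl; exact hT h)
            (by rintro (⟨rfl, rfl⟩ | h); exact hj rfl; exact hF h)⟩
  · rintro ⟨hray, hS⟩ j
    rcases eq_or_ne j i with rfl | hj
    · refine ⟨?_, ?_, fun hT hF => ?_⟩
      · rintro (⟨-, hb⟩ | h)
        · cases b
          · exact absurd hb (by simp)
          · exact hray
        · exact absurd h h2
      · rintro (⟨-, hb⟩ | h)
        · cases b
          · exact hray
          · exact absurd hb (by simp)
        · exact absurd h h3
      · cases b
        · exact absurd (Or.inl ⟨rfl, rfl⟩) hF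
        · exact absurd (Or.inl ⟨rfl, rfl⟩) hT
    · have hj' := hS j
      simp only [Function.update_of_ne hj] at hj'
      exact ⟨fun h => hj'.1 (h.resolve_left (fun ⟨h', _⟩ => hj h')),
        fun h => hj'.2.1 (h.resolve_left (fun ⟨h', _⟩ => hj h')),
        fun hT hF => hj'.2.2 (fun h => hT (Or.inr h)) (fun h => hF (Or.inr h))⟩

lemma stanley_forces {n : ℕ} {u : Fin n → ℤ} {i : Fin n} {Z : Finset (Fin n × Bool)}
    (h2 : (i, true) ∉ Z) (h3 : (i, false) ∉ Z) {c : Fin n → ℤ}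
    (hc : c ∈ stanleySet u Z) : c i = u i :=
  (hc i).2.2 h2 h3

lemma hilb_insert {n : ℕ} (u : Fin n → ℤ) (i : Fin n) (b : Bool)
    (Z : Finset (Fin n × Bool)) (h2 : (i, true) ∉ Z) (h3 : (i, false) ∉ Z) :
    hilbSeries (stanleySet u (insert (i, b) Z)) =
      (PowerSeries.mk fun k => (rayCount b (u i) k : ℚ)) *
        hilbSeries (stanleySet (Function.update u i 0) Z) := by
  classical
  ext d
  rw [PowerSeries.coeff_mul, Finset.Nat.sum_antidiagonal_eq_sum_range_succ_mk]
  simp only [hilbSeries, PowerSeries.coeff_mk]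
  have hfin : {a | a ∈ stanleySet u (insert (i, b) Z) ∧ degAbs a = d}.Finite :=
    (finite_degAbs d).subset (fun a ha => ha.2)
  have hinj : Function.Injective
      (fun a : Fin n → ℤ => ((a i, Function.update a i 0) : ℤ × (Fin n → ℤ))) := by
    intro x y hxy
    simp only [Prod.mk.injEq] at hxy
    funext j
    rcases eq_or_ne j i with rfl | hj
    · exact hxy.1
    · simpa [Function.update_of_ne hj] using congrFun hxy.2 j
  have key : ∀ k ∈ Finset.range (d + 1),
      (hfin.toFinset.filter (fun a => (a i).natAbs = k)).card
        = rayCount b (u i) k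
          * {a | a ∈ stanleySet (Function.update u i 0) Z ∧ degAbs a = d - k}.ncard := by
    intro k hk
    have hkd : k ≤ d := by simpa using Nat.lt_succ_iff.mp (Finset.mem_range.mp hk)
    have hPeq : (↑(hfin.toFinset.filter (fun a => (a i).natAbs = k)) : Set (Fin n → ℤ))
        = {a | (a ∈ stanleySet u (insert (i, b) Z) ∧ degAbs a = d) ∧ (a i).natAbs = k} := by
      ext a
      simp [Set.Finite.mem_toFinset]
    have himg : (fun a : Fin n → ℤ => ((a i, Function.update a i 0) : ℤ × (Fin n → ℤ))) ''
        {a | (a ∈ stanleySet u (insert (i, b) Z) ∧ degAbs a = d) ∧ (a i).natAbs = k}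
        = {w : ℤ | rayP b (u i) w ∧ w.natAbs = k}
            ×ˢ {a | a ∈ stanleySet (Function.update u i 0) Z ∧ degAbs a = d - k} := by
      ext ⟨w, c⟩
      simp only [Set.mem_image, Set.mem_prod, Set.mem_setOf_eq]
      constructor
      · rintro ⟨a, ⟨⟨haS, had⟩, hak⟩, heq⟩
        obtain ⟨h1, hupd⟩ := Prod.mk.injEq .. ▸ heq
        rw [mem_stanley_insert h2 h3] at haS
        subst h1
        refine ⟨⟨haS.1, hak⟩, hupd ▸ haS.2, ?_⟩
        have := degAbs_update a i
        rw [hupd] at this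
        omega
      · rintro ⟨⟨hw, hwk⟩, hc, hck⟩
        have hci : c i = 0 := by
          have := stanley_forces h2 h3 hc
          simpa using this
        refine ⟨Function.update c i w, ⟨⟨?_, ?_⟩, ?_⟩, ?_⟩
        · rw [mem_stanley_insert h2 h3]
          constructor
          · simpa using hw
          · rw [Function.update_idem, show Function.update c i 0 = c from by
              rw [← hci, Function.update_eq_self]]
            exact hc
        · rw [degAbs_update _ i, Function.update_idem, show Function.update c i 0 = c from by
            rw [← hci, Function.update_eq_self]]
          simp only [Function.update_self]
          omega
        · simpa using hwk
        · simp only [Function.update_self, Function.update_idem, Prod.mk.injEq]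
          exact ⟨trivial, by rw [← hci, Function.update_eq_self]⟩
    calc (hfin.toFinset.filter (fun a => (a i).natAbs = k)).card
        = {a | (a ∈ stanleySet u (insert (i, b) Z) ∧ degAbs a = d) ∧ (a i).natAbs = k}.ncard := by
          rw [← hPeq, Set.ncard_coe_finset]
      _ = ((fun a : Fin n → ℤ => ((a i, Function.update a i 0) : ℤ × (Fin n → ℤ))) ''
            {a | (a ∈ stanleySet u (insert (i, b) Z) ∧ degAbs a = d) ∧ (a i).natAbs = k}).ncard :=
          (Set.ncard_image_of_injective _ hinj).symm
      _ = _ := by rw [himg, ncard_prod]; rfl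
  rw [show ({a | a ∈ stanleySet u (insert (i, b) Z) ∧ degAbs a = d}).ncard
      = hfin.toFinset.card from Set.ncard_eq_toFinset_card _ hfin]
  rw [Finset.card_eq_sum_card_fiberwise (t := Finset.range (d + 1))
    (f := fun a => (a i).natAbs)
    (fun a ha => Finset.mem_range.mpr (Nat.lt_succ_iff.mpr
      ((Set.Finite.mem_toFinset hfin |>.mp ha).2 ▸ natAbs_le_degAbs a i)))]
  push_cast
  exact Finset.sum_congr rfl (fun k hk => by rw [key k hk]; push_cast; ring)

lemma hilb_empty {n : ℕ} (u : Fin n → ℤ) :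
    hilbSeries (stanleySet u (∅ : Finset (Fin n × Bool)))
      = ((Polynomial.X ^ degAbs u : Polynomial ℚ) : PowerSeries ℚ) := by
  have hS : stanleySet u (∅ : Finset (Fin n × Bool)) = {u} := by
    ext a
    simp only [stanleySet, Finset.notMem_empty, Set.mem_setOf_eq, Set.mem_singleton_iff]
    constructor
    · intro h; funext j
      exact (h j).2.2 (by simp) (by simp)
    · rintro rfl j
      exact ⟨fun h => absurd h (by simp), fun h => absurd h (by simp), fun _ _ => rfl⟩
  rw [hS]
  ext d
  rw [Polynomial.coeff_coe, Polynomial.coeff_X_pow]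
  simp only [hilbSeries, PowerSeries.coeff_mk]
  rcases eq_or_ne d (degAbs u) with rfl | h
  · rw [show {a | a ∈ ({u} : Set (Fin n → ℤ)) ∧ degAbs a = degAbs u} = {u} from by
      ext a; simp +contextual [Set.mem_singleton_iff]]
    simp
  · rw [show {a | a ∈ ({u} : Set (Fin n → ℤ)) ∧ degAbs a = d} = ∅ from by
      ext a; simp only [Set.mem_singleton_iff, Set.mem_setOf_eq, Set.mem_empty_iff_false,
        iff_false, not_and]
      rintro rfl; exact fun hh => h (hh ▸ rfl)]
    simp [h]

lemma main_aux {n : ℕ} (A : Finset (Fin n)) (Z : Finset (Fin n × Bool)) :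
    ZOk A Z → ∀ u : Fin n → ℤ,
      ∃ Q : Polynomial ℚ,
        hilbSeries (stanleySet u Z) * (1 - PowerSeries.X) ^ Z.card = (Q : PowerSeries ℚ) ∧
        Q.eval 1 = 1 := by
  classical
  induction Z using Finset.induction_on with
  | empty =>
    intro _ u
    exact ⟨Polynomial.X ^ degAbs u, by simp [hilb_empty], by simp⟩
  | @insert p Z hp ih =>
    intro hZ u
    obtain ⟨i, b⟩ := p
    have hZok : ZOk A Z :=
      ⟨fun j h => hZ.1 j (Finset.mem_insert_of_mem h),
       fun j h => hZ.2 j ⟨Finset.mem_insert_of_mem h.1, Finset.mem_insert_of_mem h.2⟩⟩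
    have h2 : (i, true) ∉ Z := by
      cases b
      · intro h
        exact hZ.2 i ⟨Finset.mem_insert_of_mem h, Finset.mem_insert_self _ _⟩
      · exact hp
    have h3 : (i, false) ∉ Z := by
      cases b
      · exact hp
      · intro h
        exact hZ.2 i ⟨Finset.mem_insert_self _ _, Finset.mem_insert_of_mem h⟩
    obtain ⟨q, hq, hq1⟩ := ray_poly b (u i)
    obtain ⟨Q', hQ', hQ'1⟩ := ih hZok (Function.update u i 0)
    refine ⟨q * Q', ?_, by simp [hq1, hQ'1]⟩
    rw [Finset.card_insert_of_notMem hp, hilb_insert u i b Z h2 h3, pow_succ,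
      Polynomial.coe_mul, ← hq, ← hQ']
    ring


/-- For a Stanley space `u·K[Z]` of `S_f` with `m = |Z|`, the Hilbert series satisfies
`H_{uK[Z]}(t) = Q(t)/(1-t)^m` for a polynomial `Q` with `Q(1) = 1`. -/
theorem hilbert_series_stanley_space {n : ℕ} (A : Finset (Fin n))
    (u : Fin n → ℤ) (hu : u ∈ SfMon A)
    (Z : Finset (Fin n × Bool)) (hZ : ZOk A Z) :
    ∃ Q : Polynomial ℚ,
      hilbSeries (stanleySet u Z) * (1 - PowerSeries.X) ^ Z.card = (Q : PowerSeries ℚ) ∧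
      Q.eval 1 = 1 := by
  exact main_aux A Z hZ u
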